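/- Fix a real number b and a real number σ > 0. Then, as t → +∞, the quantity (1 + t)^{1/2} · | 2^{(σ+it)/2 − 1} · Γ((σ+it)/2 + i b) · Γ((σ+it)/2 − i b) / Γ(σ+it) | converges to the positive constant √(2π) · 2^{−σ/2}. In particular, |𝓕_{b,2}(σ+it)| is asymptotic to C·(1+|t|)^{−1/2} as |t| → ∞ for a positive constant C depending only on σ. -/

import Mathlib

open Complex Filter Finset

lemma prod_sub_one_bound (n : ℕ) (a : ℕ → ℂ) (c : ℕ → ℝ)
    (hc : ∀ j, 0 ≤ c j) (h : ∀ j, ‖a j - 1‖ ≤ c j) :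
    ‖∏ j ∈ Finset.range n, a j - 1‖ ≤ Real.exp (∑ j ∈ Finset.range n, c j) - 1 := by
  induction n with
  | zero => simp
  | succ n ih =>
      rw [Finset.prod_range_succ, Finset.sum_range_succ]
      set P := ∏ j ∈ Finset.range n, a j with hP
      set S := ∑ j ∈ Finset.range n, c j with hS
      have h1 : ‖a n‖ ≤ 1 + c n := by
        have := norm_add_le (a n - 1) 1
        simp only [sub_add_cancel, norm_one] at this
        linarith [h n]
      have key : ‖P * a n - 1‖
          ≤ ‖P - 1‖ * ‖a n‖ + ‖a n - 1‖ := by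
        have heq : P * a n - 1 = (P - 1) * a n + (a n - 1) := by ring
        rw [heq]
        calc ‖(P - 1) * a n + (a n - 1)‖
            ≤ ‖(P - 1) * a n‖ + ‖a n - 1‖ := norm_add_le _ _
          _ = ‖P - 1‖ * ‖a n‖ + ‖a n - 1‖ := by rw [norm_mul]
      have hexp : (0:ℝ) < Real.exp S := Real.exp_pos _
      have habs0 : (0:ℝ) ≤ ‖a n‖ := norm_nonneg _
      have hP1 : (0:ℝ) ≤ ‖P - 1‖ := norm_nonneg _
      have e2 : Real.exp S * Real.exp (c n) = Real.exp (S + c n) := (Real.exp_add _ _).symm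
      calc ‖P * a n - 1‖
          ≤ ‖P - 1‖ * ‖a n‖ + ‖a n - 1‖ := key
        _ ≤ (Real.exp S - 1) * (1 + c n) + c n := by nlinarith [h n, ih, h1, hP1, habs0, hc n]
        _ ≤ Real.exp (S + c n) - 1 := by
            rw [← e2]; nlinarith [Real.add_one_le_exp (c n), hexp]

lemma sum_inv_sq_le (q : ℝ) (hq : 1 < q) (n : ℕ) :
    ∑ j ∈ Finset.range n, 1 / ((j : ℝ) + q)^2 ≤ 1 / (q - 1) := by
  have key : ∀ m : ℕ, ∑ j ∈ Finset.range m, 1 / ((j : ℝ) + q)^2 ≤ 1/(q-1) - 1/((m:ℝ)+q-1) := by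
    intro m
    induction m with
    | zero => simp
    | succ m ih =>
        rw [Finset.sum_range_succ]
        have h1 : (0:ℝ) < (m:ℝ) + q - 1 := by
          have : (0:ℝ) ≤ (m:ℝ) := Nat.cast_nonneg m
          linarith
        have h2 : (0:ℝ) < (m:ℝ) + q := by linarith
        have step : 1 / ((m:ℝ) + q)^2 ≤ 1/((m:ℝ)+q-1) - 1/((m:ℝ)+q) := by
          rw [div_sub_div _ _ (ne_of_gt h1) (ne_of_gt h2)]
          rw [div_le_div_iff₀ (by positivity) (by positivity)]
          ring_nf
          nlinarith
        have hcast : ((m:ℝ) + 1 : ℝ) + q - 1 = (m:ℝ) + q := by ring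
        push_cast
        rw [hcast]
        linarith
  have h1 : (0:ℝ) < (n:ℝ) + q - 1 := by
    have : (0:ℝ) ≤ (n:ℝ) := Nat.cast_nonneg n
    linarith
  have h2 : (0:ℝ) ≤ 1/((n:ℝ)+q-1) := by positivity
  linarith [key n]

lemma abs_mul_ge_of_normSq_ge {u v : ℂ} {X : ℝ} (hX : 0 ≤ X)
    (hu : X ≤ Complex.normSq u) (hv : X ≤ Complex.normSq v) :
    X ≤ ‖u * v‖ := by
  rw [norm_mul]
  have ha := Complex.sq_norm u
  have hb := Complex.sq_norm v
  have h1 : X^2 ≤ (‖u‖ * ‖v‖)^2 := by nlinarith [norm_nonneg u, norm_nonneg v]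
  nlinarith [mul_nonneg (norm_nonneg u) (norm_nonneg v)]



lemma shift_ne_zero {w : ℂ} (hw : 0 < w.re) (j : ℕ) : w + (j:ℂ) ≠ 0 := by
  intro h
  have : (w + (j:ℂ)).re = 0 := by rw [h]; simp
  simp only [add_re, natCast_re] at this
  have : (0:ℝ) ≤ (j:ℝ) := Nat.cast_nonneg j
  linarith [hw]

lemma Gamma_ne_zero_of_re_pos' {w : ℂ} (hw : 0 < w.re) : Complex.Gamma w ≠ 0 := by
  apply Complex.Gamma_ne_zero
  intro m h
  have : w.re = -(m:ℝ) := by rw [h]; simp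
  have : (0:ℝ) ≤ (m:ℝ) := Nat.cast_nonneg m
  simp_all
  linarith

lemma gammaSeq_ratio (p q r s : ℂ) (hpq : p + q = r + s)
    (hp : 0 < p.re) (hq : 0 < q.re) (hr : 0 < r.re) (hs : 0 < s.re)
    {n : ℕ} (hn : n ≠ 0) :
    ∏ j ∈ Finset.range (n+1), ((r + j) * (s + j) / ((p + j) * (q + j)))
      = Complex.GammaSeq p n * Complex.GammaSeq q n
        / (Complex.GammaSeq r n * Complex.GammaSeq s n) := by
  have hn0 : (n:ℂ) ≠ 0 := Nat.cast_ne_zero.mpr hn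
  have hfac : ((Nat.factorial n : ℕ) : ℂ) ≠ 0 := Nat.cast_ne_zero.mpr n.factorial_ne_zero
  have hnp : (n:ℂ) ^ p * (n:ℂ) ^ q = (n:ℂ) ^ r * (n:ℂ) ^ s := by
    rw [← cpow_add _ _ hn0, ← cpow_add _ _ hn0, hpq]
  have hPp : ∏ j ∈ Finset.range (n+1), (p + (j:ℂ)) ≠ 0 :=
    Finset.prod_ne_zero_iff.mpr (fun j _ => shift_ne_zero hp j)
  have hPq : ∏ j ∈ Finset.range (n+1), (q + (j:ℂ)) ≠ 0 :=
    Finset.prod_ne_zero_iff.mpr (fun j _ => shift_ne_zero hq j)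
  have hPr : ∏ j ∈ Finset.range (n+1), (r + (j:ℂ)) ≠ 0 :=
    Finset.prod_ne_zero_iff.mpr (fun j _ => shift_ne_zero hr j)
  have hPs : ∏ j ∈ Finset.range (n+1), (s + (j:ℂ)) ≠ 0 :=
    Finset.prod_ne_zero_iff.mpr (fun j _ => shift_ne_zero hs j)
  have hsplit : ∏ j ∈ Finset.range (n+1), ((r + j) * (s + j) / ((p + j) * (q + j)))
      = (∏ j ∈ Finset.range (n+1), (r + (j:ℂ))) * (∏ j ∈ Finset.range (n+1), (s + (j:ℂ)))
        / ((∏ j ∈ Finset.range (n+1), (p + (j:ℂ))) * (∏ j ∈ Finset.range (n+1), (q + (j:ℂ)))) := by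
    rw [Finset.prod_div_distrib, Finset.prod_mul_distrib, Finset.prod_mul_distrib]
  rw [hsplit, Complex.GammaSeq, Complex.GammaSeq, Complex.GammaSeq, Complex.GammaSeq]
  have hcp : (n:ℂ) ^ p ≠ 0 := by
    intro h; exact hn0 (cpow_eq_zero_iff _ _ |>.mp h).1
  have hcq : (n:ℂ) ^ q ≠ 0 := by
    intro h; exact hn0 (cpow_eq_zero_iff _ _ |>.mp h).1
  have hcr : (n:ℂ) ^ r ≠ 0 := by
    intro h; exact hn0 (cpow_eq_zero_iff _ _ |>.mp h).1
  have hcs : (n:ℂ) ^ s ≠ 0 := by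
    intro h; exact hn0 (cpow_eq_zero_iff _ _ |>.mp h).1
  field_simp
  linear_combination (-1) * hnp

lemma gamma_ratio_sub_one_bound (p q r s : ℂ) (hpq : p + q = r + s)
    (hp : 0 < p.re) (hq : 0 < q.re) (hr : 0 < r.re) (hs : 0 < s.re)
    (c : ℕ → ℝ) (hc0 : ∀ j, 0 ≤ c j)
    (hc : ∀ j : ℕ, ‖(r + j) * (s + j) / ((p + j) * (q + j)) - 1‖ ≤ c j)
    (S : ℝ) (hS : ∀ n, ∑ j ∈ Finset.range n, c j ≤ S) :
    ‖Complex.Gamma p * Complex.Gamma q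
      / (Complex.Gamma r * Complex.Gamma s) - 1‖ ≤ Real.exp S - 1 := by
  have hΓr := Gamma_ne_zero_of_re_pos' hr
  have hΓs := Gamma_ne_zero_of_re_pos' hs
  set L := Complex.Gamma p * Complex.Gamma q / (Complex.Gamma r * Complex.Gamma s) with hL
  have htends : Tendsto (fun n : ℕ =>
      ∏ j ∈ Finset.range (n+1), ((r + j) * (s + j) / ((p + j) * (q + j)))) atTop (nhds L) := by
    have h1 : Tendsto (fun n : ℕ => Complex.GammaSeq p n * Complex.GammaSeq q n
        / (Complex.GammaSeq r n * Complex.GammaSeq s n)) atTop (nhds L) :=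
      ((Complex.GammaSeq_tendsto_Gamma p).mul (Complex.GammaSeq_tendsto_Gamma q)).div
        ((Complex.GammaSeq_tendsto_Gamma r).mul (Complex.GammaSeq_tendsto_Gamma s))
        (mul_ne_zero hΓr hΓs)
    apply h1.congr'
    filter_upwards [eventually_ge_atTop 1] with n hn
    exact (gammaSeq_ratio p q r s hpq hp hq hr hs (by omega)).symm
  have hbound : ∀ n : ℕ, ‖(∏ j ∈ Finset.range (n+1), ((r + j) * (s + j) / ((p + j) * (q + j)))) - 1‖
      ≤ Real.exp S - 1 := by
    intro n
    calc ‖(∏ j ∈ Finset.range (n+1), ((r + j) * (s + j) / ((p + j) * (q + j)))) - 1‖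
        ≤ Real.exp (∑ j ∈ Finset.range (n+1), c j) - 1 :=
          prod_sub_one_bound (n+1) _ c hc0 hc
      _ ≤ Real.exp S - 1 := by
          have := Real.exp_le_exp.mpr (hS (n+1)); linarith
  have habs : Tendsto (fun n : ℕ => ‖(∏ j ∈ Finset.range (n+1), ((r + j) * (s + j) / ((p + j) * (q + j)))) - 1‖)
      atTop (nhds (‖L - 1‖)) :=
    (continuous_norm.tendsto _).comp (htends.sub_const 1)
  exact le_of_tendsto habs (Eventually.of_forall hbound)


lemma stepA (b σ t : ℝ) (hσ : 0 < σ) (ht : 4*|b| + 8 ≤ t) :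
    ‖Complex.Gamma (((σ:ℂ)+t*I)/2 + I*b) * Complex.Gamma (((σ:ℂ)+t*I)/2 - I*b)
      / (Complex.Gamma (((σ:ℂ)+t*I)/2) * Complex.Gamma (((σ:ℂ)+t*I)/2)) - 1‖
      ≤ Real.exp (2*b^2/(t/4-1)) - 1 := by
  have hb0 : (0:ℝ) ≤ |b| := abs_nonneg b
  have ht8 : (8:ℝ) ≤ t := by linarith
  have hq1 : (1:ℝ) < t/4 := by linarith
  have hre1 : (((σ:ℂ)+t*I)/2 + I*b).re = σ/2 := by simp [Complex.div_re]
  have hre2 : (((σ:ℂ)+t*I)/2 - I*b).re = σ/2 := by simp [Complex.div_re]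
  have hre0 : (((σ:ℂ)+t*I)/2).re = σ/2 := by simp [Complex.div_re]
  refine gamma_ratio_sub_one_bound _ _ _ _ (by ring)
    (by rw [hre1]; linarith) (by rw [hre2]; linarith) (by rw [hre0]; linarith)
    (by rw [hre0]; linarith) (fun j => 2*b^2/(((j:ℝ)+t/4)^2)) ?_ ?_ _ ?_
  · intro j; positivity
  · intro j
    set z : ℂ := ((σ:ℂ)+t*I)/2 with hz
    have hu : z + I*(b:ℝ) + (j:ℂ) = ((σ/2+j : ℝ):ℂ) + ((t/2+b : ℝ):ℂ)*I := by
      rw [hz]; push_cast; ring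
    have hv : z - I*(b:ℝ) + (j:ℂ) = ((σ/2+j : ℝ):ℂ) + ((t/2-b : ℝ):ℂ)*I := by
      rw [hz]; push_cast; ring
    have hX0 : (0:ℝ) ≤ ((j:ℝ)+t/4)^2/2 := by positivity
    have hnu : ((j:ℝ)+t/4)^2/2 ≤ Complex.normSq (z + I*(b:ℝ) + (j:ℂ)) := by
      rw [hu, Complex.normSq_add_mul_I]
      have h1 : |b| ≤ t/4 := by linarith
      have h2 : (0:ℝ) ≤ (j:ℝ) := Nat.cast_nonneg j
      nlinarith [sq_nonneg ((j:ℝ) - t/4), le_abs_self b, neg_abs_le b, sq_nonneg (σ/2)]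
    have hnv : ((j:ℝ)+t/4)^2/2 ≤ Complex.normSq (z - I*(b:ℝ) + (j:ℂ)) := by
      rw [hv, Complex.normSq_add_mul_I]
      have h1 : |b| ≤ t/4 := by linarith
      have h2 : (0:ℝ) ≤ (j:ℝ) := Nat.cast_nonneg j
      nlinarith [sq_nonneg ((j:ℝ) - t/4), le_abs_self b, neg_abs_le b, sq_nonneg (σ/2)]
    have habs : ((j:ℝ)+t/4)^2/2 ≤ ‖(z + I*(b:ℝ) + (j:ℂ)) * (z - I*(b:ℝ) + (j:ℂ))‖ :=
      abs_mul_ge_of_normSq_ge hX0 hnu hnv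
    have hpos : (0:ℝ) < ((j:ℝ)+t/4)^2/2 := by
      have h2 : (0:ℝ) ≤ (j:ℝ) := Nat.cast_nonneg j
      positivity
    have hne : (z + I*(b:ℝ) + (j:ℂ)) * (z - I*(b:ℝ) + (j:ℂ)) ≠ 0 := by
      intro h
      rw [h] at habs
      simp at habs
      linarith
    have hfact : (z + (j:ℂ)) * (z + (j:ℂ)) - (z + I*(b:ℝ) + (j:ℂ)) * (z - I*(b:ℝ) + (j:ℂ))
        = -((b:ℂ))^2 := by
      linear_combination ((b:ℂ))^2 * Complex.I_sq
    rw [div_sub_one hne, hfact, norm_div]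
    have hnum : ‖-((b:ℂ))^2‖ = b^2 := by
      have : (-((b:ℂ))^2) = ((-(b^2) : ℝ) : ℂ) := by push_cast; ring
      rw [this, Complex.norm_real, Real.norm_eq_abs, abs_neg, _root_.abs_of_nonneg (sq_nonneg b)]
    rw [hnum]
    rw [div_le_div_iff₀ (lt_of_lt_of_le hpos habs) (by positivity)]
    calc b^2 * ((j:ℝ)+t/4)^2 = (((j:ℝ)+t/4)^2/2) * (2*b^2) := by ring
      _ ≤ ‖(z + I*(b:ℝ) + (j:ℂ)) * (z - I*(b:ℝ) + (j:ℂ))‖ * (2*b^2) := by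
          nlinarith [habs, sq_nonneg b]
      _ = 2*b^2 * ‖(z + I*(b:ℝ) + (j:ℂ)) * (z - I*(b:ℝ) + (j:ℂ))‖ := by ring
  · intro n
    have h := sum_inv_sq_le (t/4) hq1 n
    calc ∑ j ∈ Finset.range n, 2*b^2/(((j:ℝ)+t/4)^2)
        = 2*b^2 * ∑ j ∈ Finset.range n, 1/(((j:ℝ)+t/4)^2) := by
          rw [Finset.mul_sum]; apply Finset.sum_congr rfl; intro j _; ring
      _ ≤ 2*b^2 * (1/(t/4-1)) := by
          apply mul_le_mul_of_nonneg_left h (by positivity)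
      _ = 2*b^2/(t/4-1) := by ring

lemma stepB (σ t : ℝ) (hσ : 0 < σ) (ht : 8 ≤ t) :
    ‖Complex.Gamma (((σ:ℂ)+t*I)/2) * Complex.Gamma (((σ:ℂ)+t*I)/2 + 1)
      / (Complex.Gamma (((σ:ℂ)+t*I)/2 + 1/2) * Complex.Gamma (((σ:ℂ)+t*I)/2 + 1/2)) - 1‖
      ≤ Real.exp ((1/2)/(t/4-1)) - 1 := by
  have hq1 : (1:ℝ) < t/4 := by linarith
  have hre0 : ((((σ:ℂ)+t*I)/2)).re = σ/2 := by simp [Complex.div_re]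
  have hre1 : ((((σ:ℂ)+t*I)/2 + 1)).re = σ/2 + 1 := by simp [Complex.div_re]
  have hre2 : ((((σ:ℂ)+t*I)/2 + 1/2)).re = σ/2 + 1/2 := by
    simp [Complex.div_re, Complex.add_re]
  refine gamma_ratio_sub_one_bound _ _ _ _ (by ring)
    (by rw [hre0]; linarith) (by rw [hre1]; linarith) (by rw [hre2]; linarith)
    (by rw [hre2]; linarith) (fun j => (1/2)/(((j:ℝ)+t/4)^2)) ?_ ?_ _ ?_
  · intro j; positivity
  · intro j
    set z : ℂ := ((σ:ℂ)+t*I)/2 with hz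
    have hu : z + (j:ℂ) = ((σ/2+j : ℝ):ℂ) + ((t/2 : ℝ):ℂ)*I := by
      rw [hz]; push_cast; ring
    have hv : z + 1 + (j:ℂ) = ((σ/2+1+j : ℝ):ℂ) + ((t/2 : ℝ):ℂ)*I := by
      rw [hz]; push_cast; ring
    have hX0 : (0:ℝ) ≤ ((j:ℝ)+t/4)^2/2 := by positivity
    have h2 : (0:ℝ) ≤ (j:ℝ) := Nat.cast_nonneg j
    have hnu : ((j:ℝ)+t/4)^2/2 ≤ Complex.normSq (z + (j:ℂ)) := by
      rw [hu, Complex.normSq_add_mul_I]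
      nlinarith [sq_nonneg ((j:ℝ) - t/4), sq_nonneg (σ/2)]
    have hnv : ((j:ℝ)+t/4)^2/2 ≤ Complex.normSq (z + 1 + (j:ℂ)) := by
      rw [hv, Complex.normSq_add_mul_I]
      nlinarith [sq_nonneg ((j:ℝ) - t/4), sq_nonneg (σ/2)]
    have habs : ((j:ℝ)+t/4)^2/2 ≤ ‖(z + (j:ℂ)) * (z + 1 + (j:ℂ))‖ :=
      abs_mul_ge_of_normSq_ge hX0 hnu hnv
    have hpos : (0:ℝ) < ((j:ℝ)+t/4)^2/2 := by positivity
    have hne : (z + (j:ℂ)) * (z + 1 + (j:ℂ)) ≠ 0 := by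
      intro h; rw [h] at habs; simp at habs; linarith
    have hfact : (z + 1/2 + (j:ℂ)) * (z + 1/2 + (j:ℂ)) - (z + (j:ℂ)) * (z + 1 + (j:ℂ))
        = (1/4 : ℂ) := by ring
    rw [div_sub_one hne, hfact, norm_div]
    have hnum : ‖(1/4 : ℂ)‖ = 1/4 := by norm_num
    rw [hnum]
    rw [div_le_div_iff₀ (lt_of_lt_of_le hpos habs) (by positivity)]
    calc (1/4 : ℝ) * ((j:ℝ)+t/4)^2 = (((j:ℝ)+t/4)^2/2) * (1/2) := by ring
      _ ≤ ‖(z + (j:ℂ)) * (z + 1 + (j:ℂ))‖ * (1/2) := by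
          nlinarith [habs]
      _ = 1/2 * ‖(z + (j:ℂ)) * (z + 1 + (j:ℂ))‖ := by ring
  · intro n
    have h := sum_inv_sq_le (t/4) hq1 n
    calc ∑ j ∈ Finset.range n, (1/2)/(((j:ℝ)+t/4)^2)
        = 1/2 * ∑ j ∈ Finset.range n, 1/(((j:ℝ)+t/4)^2) := by
          rw [Finset.mul_sum]; apply Finset.sum_congr rfl; intro j _; ring
      _ ≤ 1/2 * (1/(t/4-1)) := by
          apply mul_le_mul_of_nonneg_left h (by positivity)
      _ = (1/2)/(t/4-1) := by ring


-- epsilon limit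
lemma eps_tendsto (C : ℝ) :
    Tendsto (fun t : ℝ => Real.exp (C/(t/4-1)) - 1) atTop (nhds 0) := by
  have h1 : Tendsto (fun t : ℝ => t/4 - 1) atTop atTop := by
    apply tendsto_atTop_add_const_right
    exact Tendsto.atTop_div_const (by norm_num) tendsto_id
  have h2 : Tendsto (fun t : ℝ => C/(t/4-1)) atTop (nhds 0) :=
    Tendsto.div_atTop tendsto_const_nhds h1
  have h3 := (Real.continuous_exp.tendsto 0).comp h2
  have := h3.sub_const 1
  simpa [Function.comp_def] using this

-- (1+t)/|z| → 2
lemma ratio_tendsto (σ : ℝ) (hσ : 0 < σ) :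
    Tendsto (fun t : ℝ => (1+t) / ‖((σ:ℂ)+t*I)/2‖) atTop (nhds 2) := by
  have habsz : ∀ t : ℝ, ‖((σ:ℂ)+t*I)/2‖ = Real.sqrt (σ^2+t^2)/2 := by
    intro t
    rw [Complex.norm_def]
    have h1 : (((σ:ℂ)+t*I)/2) = ((σ/2 : ℝ):ℂ) + ((t/2 : ℝ):ℂ)*I := by push_cast; ring
    rw [h1, Complex.normSq_add_mul_I]
    rw [show (σ/2)^2+(t/2)^2 = (1/2)^2*(σ^2+t^2) by ring,
      Real.sqrt_mul (by positivity), Real.sqrt_sq (by norm_num)]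
    ring
  have hinner : Tendsto (fun t : ℝ => (1+t)^2/(σ^2+t^2)) atTop (nhds 1) := by
    have h0 : Tendsto (fun t : ℝ => 1/t) atTop (nhds 0) := by
      simpa [one_div] using (tendsto_inv_atTop_zero : Tendsto (fun r : ℝ => r⁻¹) atTop (nhds 0))
    have hnum : Tendsto (fun t : ℝ => (1/t+1)^2) atTop (nhds 1) := by
      have := (h0.add_const 1).pow 2
      simpa using this
    have hden : Tendsto (fun t : ℝ => (σ*(1/t))^2+1) atTop (nhds 1) := by
      have := ((h0.const_mul σ).pow 2).add_const 1
      simpa using this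
    have hdiv := hnum.div hden (by norm_num)
    rw [show (1:ℝ)/1 = 1 by norm_num] at hdiv
    apply hdiv.congr'
    filter_upwards [eventually_gt_atTop 0] with t ht
    show (1/t+1)^2 / ((σ*(1/t))^2+1) = (1+t)^2/(σ^2+t^2)
    rw [div_eq_div_iff (by positivity) (by positivity)]
    field_simp
  have hsqrt : Tendsto (fun t : ℝ => 2 * Real.sqrt ((1+t)^2/(σ^2+t^2))) atTop (nhds 2) := by
    have := ((Real.continuous_sqrt.tendsto 1).comp hinner).const_mul 2
    simpa using this
  apply hsqrt.congr'
  filter_upwards [eventually_ge_atTop 0] with t ht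
  show 2 * Real.sqrt ((1+t)^2/(σ^2+t^2)) = (1+t) / ‖((σ:ℂ)+t*I)/2‖
  rw [habsz t, Real.sqrt_div (by positivity) , Real.sqrt_sq (by linarith)]
  rw [div_div_eq_mul_div]
  ring

lemma ratioA_tendsto (b σ : ℝ) (hσ : 0 < σ) :
    Tendsto (fun t : ℝ => ‖Complex.Gamma (((σ:ℂ)+t*I)/2 + I*b)
      * Complex.Gamma (((σ:ℂ)+t*I)/2 - I*b)
      / (Complex.Gamma (((σ:ℂ)+t*I)/2) * Complex.Gamma (((σ:ℂ)+t*I)/2))‖) atTop (nhds 1) := by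
  have hdist : Tendsto (fun t : ℝ => ‖Complex.Gamma (((σ:ℂ)+t*I)/2 + I*b)
      * Complex.Gamma (((σ:ℂ)+t*I)/2 - I*b)
      / (Complex.Gamma (((σ:ℂ)+t*I)/2) * Complex.Gamma (((σ:ℂ)+t*I)/2)) - 1‖) atTop (nhds 0) := by
    apply squeeze_zero' (Eventually.of_forall (fun t => norm_nonneg _))
      _ (eps_tendsto (2*b^2))
    filter_upwards [eventually_ge_atTop (4*|b|+8)] with t ht
    exact stepA b σ t hσ ht
  have h1 : Tendsto (fun t : ℝ => (Complex.Gamma (((σ:ℂ)+t*I)/2 + I*b)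
      * Complex.Gamma (((σ:ℂ)+t*I)/2 - I*b)
      / (Complex.Gamma (((σ:ℂ)+t*I)/2) * Complex.Gamma (((σ:ℂ)+t*I)/2)))) atTop (nhds 1) := by
    rw [tendsto_iff_dist_tendsto_zero]
    simpa [Complex.dist_eq] using hdist
  have := (continuous_norm.tendsto 1).comp h1
  simpa [Function.comp_def] using this

lemma ratioB_tendsto (σ : ℝ) (hσ : 0 < σ) :
    Tendsto (fun t : ℝ => ‖Complex.Gamma (((σ:ℂ)+t*I)/2)
      * Complex.Gamma (((σ:ℂ)+t*I)/2 + 1)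
      / (Complex.Gamma (((σ:ℂ)+t*I)/2 + 1/2) * Complex.Gamma (((σ:ℂ)+t*I)/2 + 1/2))‖) atTop (nhds 1) := by
  have hdist : Tendsto (fun t : ℝ => ‖Complex.Gamma (((σ:ℂ)+t*I)/2)
      * Complex.Gamma (((σ:ℂ)+t*I)/2 + 1)
      / (Complex.Gamma (((σ:ℂ)+t*I)/2 + 1/2) * Complex.Gamma (((σ:ℂ)+t*I)/2 + 1/2)) - 1‖) atTop (nhds 0) := by
    apply squeeze_zero' (Eventually.of_forall (fun t => norm_nonneg _))
      _ (eps_tendsto (1/2))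
    filter_upwards [eventually_ge_atTop 8] with t ht
    exact stepB σ t hσ ht
  have h1 : Tendsto (fun t : ℝ => (Complex.Gamma (((σ:ℂ)+t*I)/2)
      * Complex.Gamma (((σ:ℂ)+t*I)/2 + 1)
      / (Complex.Gamma (((σ:ℂ)+t*I)/2 + 1/2) * Complex.Gamma (((σ:ℂ)+t*I)/2 + 1/2)))) atTop (nhds 1) := by
    rw [tendsto_iff_dist_tendsto_zero]
    simpa [Complex.dist_eq] using hdist
  have := (continuous_norm.tendsto 1).comp h1
  simpa [Function.comp_def] using this

/-- Asymptotics of `𝓕_{b,2}(σ+it)` as `t → ∞`: the quantity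
`(1+t)^{1/2} |2^{(σ+it)/2-1} Γ((σ+it)/2+ib) Γ((σ+it)/2-ib) / Γ(σ+it)|`
tends to `√(2π)·2^{-σ/2}`. -/
theorem picard_F_b_two_asymptotic (b : ℝ) (σ : ℝ) (hσ : 0 < σ) :
    Tendsto (fun t : ℝ =>
      (1 + t) ^ ((1:ℝ)/2) *
        ‖((2 : ℂ) ^ (((σ : ℂ) + t * I) / 2 - 1) *
          Complex.Gamma (((σ : ℂ) + t * I) / 2 + I * b) *
          Complex.Gamma (((σ : ℂ) + t * I) / 2 - I * b) /
          Complex.Gamma ((σ : ℂ) + t * I))‖)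
      atTop (nhds (Real.sqrt (2 * Real.pi) * (2 : ℝ) ^ (-σ / 2))) := by
  -- the squared auxiliary function
  set G : ℝ → ℝ := fun t => Real.pi * (2:ℝ)^(-σ:ℝ) *
      (‖Complex.Gamma (((σ:ℂ)+t*I)/2 + I*b)
        * Complex.Gamma (((σ:ℂ)+t*I)/2 - I*b)
        / (Complex.Gamma (((σ:ℂ)+t*I)/2) * Complex.Gamma (((σ:ℂ)+t*I)/2))‖)^2 *
      (‖Complex.Gamma (((σ:ℂ)+t*I)/2)
        * Complex.Gamma (((σ:ℂ)+t*I)/2 + 1)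
        / (Complex.Gamma (((σ:ℂ)+t*I)/2 + 1/2) * Complex.Gamma (((σ:ℂ)+t*I)/2 + 1/2))‖) *
      ((1+t) / ‖((σ:ℂ)+t*I)/2‖) with hG
  have hGlim : Tendsto G atTop (nhds (2 * Real.pi * (2:ℝ)^(-σ:ℝ))) := by
    have := (((tendsto_const_nhds (x := Real.pi * (2:ℝ)^(-σ:ℝ)) (f := atTop)).mul
      ((ratioA_tendsto b σ hσ).pow 2)).mul (ratioB_tendsto σ hσ)).mul (ratio_tendsto σ hσ)
    rw [hG]
    convert this using 2
    ring
  have hsqrtlim : Tendsto (fun t => Real.sqrt (G t)) atTop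
      (nhds (Real.sqrt (2 * Real.pi) * (2:ℝ)^(-σ/2))) := by
    have h1 := (Real.continuous_sqrt.tendsto _).comp hGlim
    have h2 : Real.sqrt (2 * Real.pi * (2:ℝ)^(-σ:ℝ))
        = Real.sqrt (2 * Real.pi) * (2:ℝ)^(-σ/2) := by
      rw [Real.sqrt_mul (by positivity), Real.sqrt_eq_rpow ((2:ℝ)^(-σ:ℝ)),
        ← Real.rpow_mul (by norm_num)]
      norm_num
      left
      ring
    rw [← h2]
    exact h1
  apply hsqrtlim.congr'
  filter_upwards [eventually_ge_atTop 1] with t ht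
  -- pointwise identity
  set z : ℂ := ((σ:ℂ)+t*I)/2 with hz
  have hzre : z.re = σ/2 := by rw [hz]; simp [Complex.div_re]
  have hzhre : (z + 1/2).re = σ/2 + 1/2 := by rw [hz]; simp [Complex.div_re]
  have hz0 : z ≠ 0 := by
    intro h; rw [h] at hzre; simp at hzre; linarith
  have hΓz : Complex.Gamma z ≠ 0 := Gamma_ne_zero_of_re_pos' (by rw [hzre]; linarith)
  have hΓzh : Complex.Gamma (z + 1/2) ≠ 0 := Gamma_ne_zero_of_re_pos' (by rw [hzhre]; linarith)
  have haz : (0:ℝ) < ‖z‖ := by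
    exact norm_pos_iff.mpr hz0
  have hpow2 : (2:ℂ)^(1-((σ:ℂ)+t*I)) ≠ 0 := by
    simp [Complex.cpow_eq_zero_iff]
  have hsqrtpi : ((Real.sqrt Real.pi : ℝ):ℂ) ≠ 0 := by
    simp [Real.sqrt_ne_zero', Real.pi_pos]
  -- duplication
  have hdup := Complex.Gamma_mul_Gamma_add_half z
  rw [show (2:ℂ)*z = (σ:ℂ)+t*I by rw [hz]; ring] at hdup
  have hΓs : Complex.Gamma ((σ:ℂ)+t*I)
      = Complex.Gamma z * Complex.Gamma (z+1/2)
        / ((2:ℂ)^(1-((σ:ℂ)+t*I)) * ((Real.sqrt Real.pi : ℝ):ℂ)) := by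
    rw [eq_div_iff (mul_ne_zero hpow2 hsqrtpi)]
    linear_combination -hdup
  -- complex identity for the main expression
  have hE : (2 : ℂ) ^ (z - 1) * Complex.Gamma (z + I * b) * Complex.Gamma (z - I * b)
      / Complex.Gamma ((σ : ℂ) + t * I)
      = (2 : ℂ) ^ (z - 1) * Complex.Gamma (z + I * b) * Complex.Gamma (z - I * b)
        * ((2:ℂ)^(1-((σ:ℂ)+t*I)) * ((Real.sqrt Real.pi : ℝ):ℂ))
        / (Complex.Gamma z * Complex.Gamma (z+1/2)) := by
    rw [hΓs, div_div_eq_mul_div]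
  -- abs values of powers
  have habs1 : ‖(2:ℂ)^(z-1)‖ = (2:ℝ)^(σ/2 - 1 : ℝ) := by
    rw [show (2:ℂ) = ((2:ℝ):ℂ) by norm_num,
      Complex.norm_cpow_eq_rpow_re_of_pos (by norm_num)]
    congr 1
    simp [hzre]
  have habs2 : ‖(2:ℂ)^(1-((σ:ℂ)+t*I))‖ = (2:ℝ)^(1-σ : ℝ) := by
    rw [show (2:ℂ) = ((2:ℝ):ℂ) by norm_num,
      Complex.norm_cpow_eq_rpow_re_of_pos (by norm_num)]
    congr 1
    simp
  have habs3 : ‖((Real.sqrt Real.pi : ℝ):ℂ)‖ = Real.sqrt Real.pi := by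
    rw [Complex.norm_real, Real.norm_eq_abs, _root_.abs_of_nonneg (Real.sqrt_nonneg _)]
  -- Gamma(z+1) = z Gamma z
  have hg1 : Complex.Gamma (z+1) = z * Complex.Gamma z := Complex.Gamma_add_one z hz0
  -- abbreviations
  set a1 : ℝ := ‖Complex.Gamma (z + I*b)‖ with ha1
  set a2 : ℝ := ‖Complex.Gamma (z - I*b)‖ with ha2
  set g0 : ℝ := ‖Complex.Gamma z‖ with hg0
  set gh : ℝ := ‖Complex.Gamma (z+1/2)‖ with hgh
  set az : ℝ := ‖z‖ with hazdef
  have hg0pos : 0 < g0 := norm_pos_iff.mpr hΓz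
  have hghpos : 0 < gh := norm_pos_iff.mpr hΓzh
  -- compute abs of E
  have habsE : ‖(2 : ℂ) ^ (z - 1) * Complex.Gamma (z + I * b)
      * Complex.Gamma (z - I * b) / Complex.Gamma ((σ : ℂ) + t * I)‖
      = (2:ℝ)^(σ/2 - 1 : ℝ) * a1 * a2 * ((2:ℝ)^(1-σ : ℝ) * Real.sqrt Real.pi) / (g0 * gh) := by
    rw [hE, norm_div, norm_mul, norm_mul, norm_mul, norm_mul, norm_mul,
      habs1, habs2, habs3]
  -- compute G t
  have hGA : ‖Complex.Gamma (z + I*b) * Complex.Gamma (z - I*b)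
      / (Complex.Gamma z * Complex.Gamma z)‖ = a1 * a2 / (g0 * g0) := by
    rw [norm_div, norm_mul, norm_mul]
  have hGB : ‖Complex.Gamma z * Complex.Gamma (z+1)
      / (Complex.Gamma (z+1/2) * Complex.Gamma (z+1/2))‖ = g0 * (az * g0) / (gh * gh) := by
    rw [norm_div, norm_mul, norm_mul, hg1, norm_mul]
  have hGt : G t = Real.pi * (2:ℝ)^(-σ:ℝ) * (a1 * a2 / (g0 * g0))^2
      * (g0 * (az * g0) / (gh * gh)) * ((1+t)/az) := by
    rw [hG]
    dsimp only
    rw [← hz, hGA, hGB]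
  -- rpow arithmetic
  have hrpow : ((2:ℝ)^(σ/2 - 1 : ℝ))^2 * (((2:ℝ)^(1-σ : ℝ))^2 * Real.pi) = Real.pi * (2:ℝ)^(-σ:ℝ) := by
    rw [← Real.rpow_natCast ((2:ℝ)^(σ/2 - 1 : ℝ)) 2, ← Real.rpow_natCast ((2:ℝ)^(1-σ : ℝ)) 2,
      ← Real.rpow_mul (by norm_num), ← Real.rpow_mul (by norm_num)]
    rw [show (2:ℝ)^((σ/2-1) * ((2:ℕ):ℝ)) * ((2:ℝ)^((1-σ) * ((2:ℕ):ℝ)) * Real.pi)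
        = ((2:ℝ)^((σ/2-1) * ((2:ℕ):ℝ)) * (2:ℝ)^((1-σ) * ((2:ℕ):ℝ))) * Real.pi by ring,
      ← Real.rpow_add (by norm_num : (0:ℝ) < 2)]
    rw [show (σ/2-1) * ((2:ℕ):ℝ) + (1-σ) * ((2:ℕ):ℝ) = -σ by push_cast; ring]
    ring
  have hsqpi : (Real.sqrt Real.pi)^2 = Real.pi := Real.sq_sqrt Real.pi_pos.le
  -- the squared identity
  have hsq : G t = ((1 + t) ^ ((1:ℝ)/2) * ‖(2 : ℂ) ^ (z - 1)
      * Complex.Gamma (z + I * b) * Complex.Gamma (z - I * b)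
      / Complex.Gamma ((σ : ℂ) + t * I)‖)^2 := by
    rw [mul_pow, habsE, hGt]
    have hhalf : ((1+t) ^ ((1:ℝ)/2))^2 = 1 + t := by
      rw [← Real.rpow_natCast ((1+t) ^ ((1:ℝ)/2)) 2, ← Real.rpow_mul (by linarith)]
      norm_num
    rw [hhalf]
    have hc : ((2:ℝ)^(σ/2-1:ℝ) * ((2:ℝ)^(1-σ:ℝ) * Real.sqrt Real.pi))^2
        = Real.pi * (2:ℝ)^(-σ:ℝ) := by
      rw [mul_pow, mul_pow, hsqpi]; exact hrpow
    have habsE2 : ((2:ℝ)^(σ/2-1:ℝ) * a1 * a2 * ((2:ℝ)^(1-σ:ℝ) * Real.sqrt Real.pi) / (g0*gh))^2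
        = Real.pi * (2:ℝ)^(-σ:ℝ) * a1^2 * a2^2 / (g0^2 * gh^2) := by
      rw [div_pow, show ((2:ℝ)^(σ/2-1:ℝ) * a1 * a2 * ((2:ℝ)^(1-σ:ℝ) * Real.sqrt Real.pi))^2
          = ((2:ℝ)^(σ/2-1:ℝ) * ((2:ℝ)^(1-σ:ℝ) * Real.sqrt Real.pi))^2 * (a1^2*a2^2) by ring, hc]
      ring
    rw [habsE2]
    field_simp
  rw [hsq]
  rw [Real.sqrt_sq (by positivity)]
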